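/- Let ψ_{n,m} be the Hermite wavelet as above, and let J²ψ_{n,m}(t) = ∫_0^t ∫_0^s ψ_{n,m}(u) du ds be its twice-iterated integral. Then for all t ∈ [0,1], |J²ψ_{n,m}(t)| ≤ 2^{-k/2} * h / (sqrt(n! * 2^n * sqrt(π)) * (m+1)), where h = ∫_{-1}^1 |H_{m+1}'(y)| dy. -/

import Mathlib

open Real MeasureTheory

noncomputable def hermiteH : ℕ → ℝ → ℝ
  | 0, _ => 1
  | 1, t => 2 * t
  | (m + 2), t => 2 * t * hermiteH (m + 1) t - 2 * (m + 1) * hermiteH m t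

lemma hermiteH_hasDerivAt : ∀ (m : ℕ) (y : ℝ), HasDerivAt (hermiteH m)
    (if m = 0 then 0 else 2 * m * hermiteH (m - 1) y) y := by
  intro m
  induction m using Nat.strong_induction_on with
  | _ m ih =>
    match m with
    | 0 =>
      intro y
      have h0 : hermiteH 0 = fun _ => (1 : ℝ) := by funext t; simp [hermiteH]
      simpa [h0] using hasDerivAt_const y (1 : ℝ)
    | 1 =>
      intro y
      have h1 : hermiteH 1 = fun t => 2 * t := by funext t; simp [hermiteH]
      have h0 : hermiteH 0 y = 1 := by simp [hermiteH]
      rw [h1]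
      simpa [h0] using (hasDerivAt_id y).const_mul (2 : ℝ)
    | (m + 2) =>
      intro y
      have h1 := ih (m + 1) (by omega) y
      have h2 := ih m (by omega) y
      rw [if_neg (Nat.succ_ne_zero m), Nat.add_sub_cancel] at h1
      have e : hermiteH (m + 2) =
          fun t => 2 * t * hermiteH (m + 1) t - 2 * (m + 1) * hermiteH m t := by
        funext t; rw [hermiteH]
      rw [e]
      have hprod := (((hasDerivAt_id y).const_mul (2 : ℝ)).mul h1).sub
        (h2.const_mul (2 * ((m : ℝ) + 1)))
      simp only [id_eq] at hprod
      refine hprod.congr_deriv (Eq.symm ?_)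
      rw [if_neg (Nat.succ_ne_zero (m + 1))]
      match m with
      | 0 =>
        simp only [if_pos rfl]
        have hh1 : hermiteH 1 y = 2 * y := by simp [hermiteH]
        have hh0 : hermiteH 0 y = 1 := by simp [hermiteH]
        push_cast
        rw [hh1, hh0]
        ring
      | (j + 1) =>
        rw [if_neg (Nat.succ_ne_zero j), Nat.add_sub_cancel]
        have hrec : hermiteH (j + 2) y
            = 2 * y * hermiteH (j + 1) y - 2 * (j + 1) * hermiteH j y := by rw [hermiteH]
        push_cast [Nat.add_sub_cancel] at *
        rw [hrec]
        ring

lemma hermiteH_deriv (m : ℕ) :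
    deriv (hermiteH (m + 1)) = fun y => 2 * ((m : ℝ) + 1) * hermiteH m y := by
  funext y
  have h := (hermiteH_hasDerivAt (m + 1) y).deriv
  rw [if_neg (Nat.succ_ne_zero m), Nat.add_sub_cancel] at h
  rw [h]; push_cast; ring

lemma hermiteH_continuous (m : ℕ) : Continuous (hermiteH m) := by
  have : Differentiable ℝ (hermiteH m) := fun y => (hermiteH_hasDerivAt m y).differentiableAt
  exact this.continuous

noncomputable def hermiteWavelet (k n m : ℕ) (t : ℝ) : ℝ :=
  if t ∈ Set.Ico (((2 : ℝ) * n - 2) / 2 ^ k) ((2 * n) / 2 ^ k) then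
    (2 : ℝ) ^ ((k : ℝ) / 2) * (1 / Real.sqrt (n.factorial * 2 ^ n * Real.sqrt π)) *
      hermiteH m (2 ^ k * t - (2 * n - 1))
  else 0

/-- Twice-iterated integral `J²g(t) = ∫_0^t ∫_0^s g(u) du ds`. -/
noncomputable def J2 (g : ℝ → ℝ) (t : ℝ) : ℝ :=
  ∫ s in (0 : ℝ)..t, ∫ u in (0 : ℝ)..s, g u

set_option maxHeartbeats 1000000 in
theorem hermite_wavelet_J2_bound (k n m : ℕ) (hk : 1 ≤ k) (hn1 : 1 ≤ n)
    (hn2 : n ≤ 2 ^ (k - 1)) :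
    ∀ t ∈ Set.Icc (0 : ℝ) 1,
      |J2 (hermiteWavelet k n m) t| ≤
        (2 : ℝ) ^ (-(k : ℝ) / 2) * (∫ y in (-1 : ℝ)..1, |deriv (hermiteH (m + 1)) y|) /
          (Real.sqrt (n.factorial * 2 ^ n * Real.sqrt π) * (m + 1)) := by
  rintro t ⟨ht0, ht1⟩
  set S := Real.sqrt (n.factorial * 2 ^ n * Real.sqrt π) with hSdef
  have hS : 0 < S := Real.sqrt_pos.2 (by positivity)
  set C : ℝ := (2 : ℝ) ^ ((k : ℝ) / 2) * (1 / S) with hCdef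
  have hC : 0 ≤ C := by positivity
  set a : ℝ := ((2 : ℝ) * n - 2) / 2 ^ k with hadef
  set b : ℝ := ((2 : ℝ) * n) / 2 ^ k with hbdef
  have h2k : (0 : ℝ) < 2 ^ k := by positivity
  have hab : a ≤ b := by
    rw [hadef, hbdef, div_le_div_iff₀ h2k h2k]
    nlinarith [h2k]
  set g : ℝ → ℝ := fun u => C * hermiteH m (2 ^ k * u - (2 * n - 1)) with hgdef
  have hψ : hermiteWavelet k n m = (Set.Ico a b).indicator g := by
    funext u
    simp only [hermiteWavelet, Set.indicator_apply, hgdef, hCdef, hadef, hbdef, hSdef]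
  have hgc : Continuous g := by
    apply continuous_const.mul
    exact (hermiteH_continuous m).comp (by continuity)
  have hint : Integrable (hermiteWavelet k n m) := by
    rw [hψ]
    exact ((hgc.integrableOn_Icc).mono_set Set.Ico_subset_Icc_self).integrable_indicator
      measurableSet_Ico
  set I : ℝ := ∫ y in (-1 : ℝ)..1, |hermiteH m y| with hIdef
  have hI : 0 ≤ I := intervalIntegral.integral_nonneg (by norm_num) (fun x _ => abs_nonneg _)
  -- total integral of |ψ|
  have habs : (∫ u, |hermiteWavelet k n m u|) = C * ((2 : ℝ) ^ k)⁻¹ * I := by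
    have habs' : (fun u => |hermiteWavelet k n m u|)
        = (Set.Ico a b).indicator (fun u => |g u|) := by
      funext u
      rw [hψ]
      simp only [Set.indicator_apply]
      split_ifs <;> simp
    rw [habs', integral_indicator measurableSet_Ico,
      setIntegral_congr_set Ico_ae_eq_Ioc,
      ← intervalIntegral.integral_of_le hab]
    have : ∀ u, |g u| = C * |hermiteH m (2 ^ k * u - (2 * n - 1))| := by
      intro u
      rw [hgdef]
      simp only
      rw [abs_mul, abs_of_nonneg hC]
    simp only [this]
    rw [intervalIntegral.integral_const_mul]
    have hsub := intervalIntegral.integral_comp_mul_sub (a := a) (b := b)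
      (fun y => |hermiteH m y|) (ne_of_gt h2k) ((2 : ℝ) * n - 1)
    have ha' : (2 : ℝ) ^ k * a - (2 * n - 1) = -1 := by
      rw [hadef]; field_simp; ring
    have hb' : (2 : ℝ) ^ k * b - (2 * n - 1) = 1 := by
      rw [hbdef]; field_simp; ring
    rw [hsub, ha', hb', smul_eq_mul, hIdef]
    ring
  set B : ℝ := C * ((2 : ℝ) ^ k)⁻¹ * I with hBdef
  have hBnn : 0 ≤ B := by positivity
  -- inner bound
  have inner : ∀ s ∈ Set.uIoc (0 : ℝ) t, ‖∫ u in (0 : ℝ)..s, hermiteWavelet k n m u‖ ≤ B := by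
    intro s hs
    rw [Set.uIoc_of_le ht0] at hs
    have hs0 : (0 : ℝ) ≤ s := le_of_lt hs.1
    calc ‖∫ u in (0 : ℝ)..s, hermiteWavelet k n m u‖
        ≤ |∫ u in (0 : ℝ)..s, ‖hermiteWavelet k n m u‖| :=
          intervalIntegral.norm_integral_le_abs_integral_norm
      _ = ∫ u in Set.Ioc (0 : ℝ) s, |hermiteWavelet k n m u| := by
          rw [intervalIntegral.integral_of_le hs0]
          exact abs_of_nonneg (setIntegral_nonneg measurableSet_Ioc (fun x _ => abs_nonneg _))
      _ ≤ ∫ u, |hermiteWavelet k n m u| :=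
          setIntegral_le_integral hint.abs (Filter.Eventually.of_forall fun x => abs_nonneg _)
      _ = B := habs
  have houter : |J2 (hermiteWavelet k n m) t| ≤ B * |t - 0| := by
    exact intervalIntegral.norm_integral_le_of_norm_le_const inner
  have hBt : |J2 (hermiteWavelet k n m) t| ≤ B := by
    refine houter.trans ?_
    have : |t - 0| ≤ 1 := by rw [sub_zero, abs_of_nonneg ht0]; exact ht1
    nlinarith
  refine hBt.trans ?_
  -- compute RHS
  have hrhsI : (∫ y in (-1 : ℝ)..1, |deriv (hermiteH (m + 1)) y|) = 2 * ((m : ℝ) + 1) * I := by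
    simp only [hermiteH_deriv m]
    have : ∀ y : ℝ, |2 * ((m : ℝ) + 1) * hermiteH m y| = 2 * ((m : ℝ) + 1) * |hermiteH m y| := by
      intro y; rw [abs_mul, abs_of_nonneg (by positivity)]
    simp only [this]
    rw [intervalIntegral.integral_const_mul, hIdef]
  rw [hrhsI]
  have hpow : C * ((2 : ℝ) ^ k)⁻¹ = (2 : ℝ) ^ (-(k : ℝ) / 2) * (1 / S) := by
    rw [hCdef]
    have : ((2 : ℝ) ^ k)⁻¹ = (2 : ℝ) ^ (-(k : ℝ)) := by
      rw [← Real.rpow_natCast 2 k, ← Real.rpow_neg (by norm_num)]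
    rw [this]
    rw [mul_comm ((2:ℝ) ^ ((k:ℝ)/2)) (1/S), mul_assoc, ← Real.rpow_add (by norm_num)]
    ring_nf
  have hm1 : (0 : ℝ) < (m : ℝ) + 1 := by positivity
  have key : (2 : ℝ) ^ (-(k : ℝ) / 2) * (2 * ((m : ℝ) + 1) * I) / (S * ((m : ℝ) + 1))
      = 2 * ((2 : ℝ) ^ (-(k : ℝ) / 2) * (1 / S) * I) := by
    field_simp
  push_cast
  rw [key, hBdef, hpow]
  nlinarith [mul_nonneg (mul_nonneg (Real.rpow_nonneg (by norm_num : (0:ℝ) ≤ 2) (-(k:ℝ)/2)) (le_of_lt (one_div_pos.2 hS))) hI]
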